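/- For h(x) = sin x and c(x) = e^{cos x}, with f(x) = x·h(log x) and α(x) = c(log x), one has α(u)·f(u) − f(α(u)·u) = u·c(log u)·(h(log u) − h(log u + log c(log u))) ≤ 0 for all u > 0. -/

import Mathlib

lemma key_cos_pos (c : ℝ) (h : 0 < c) (hc1 : c ≤ 1) : 1 - Real.cos c ≤ c * Real.sin c := by
  have hs : c - c ^ 3 / 4 < Real.sin c := by
    have := Real.sin_gt_sub_cube h; linarith [pow_pos h 3]
  have hcos := Real.one_sub_sq_div_two_le_cos (x := c)
  have h1 : c * (c - c ^ 3 / 4) ≤ c * Real.sin c :=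
    mul_le_mul_of_nonneg_left hs.le h.le
  have h2 : c ^ 2 ≤ 1 := by nlinarith
  have h3 : c ^ 4 ≤ c ^ 2 := by nlinarith
  nlinarith

lemma key_cos (c : ℝ) (hc : |c| ≤ 1) : 1 - Real.cos c ≤ c * Real.sin c := by
  rcases lt_trichotomy c 0 with h | h | h
  · have hc' : 0 < -c := by linarith
    have hc1 : -c ≤ 1 := by rw [abs_le] at hc; linarith
    have := key_cos_pos (-c) hc' hc1
    rw [Real.cos_neg, Real.sin_neg] at this
    nlinarith
  · simp [h]
  · exact key_cos_pos c h (by rw [abs_le] at hc; exact hc.2)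

lemma key_sin (t : ℝ) : Real.sin t ≤ Real.sin (t + Real.cos t) := by
  set c := Real.cos t with hc
  have habs : |c| ≤ 1 := Real.abs_cos_le_one t
  have h1 : 1 - Real.cos c ≤ c * Real.sin c := key_cos c habs
  have h2 : (1 - Real.cos c) * Real.sin t ≤ 1 - Real.cos c := by
    have : 0 ≤ 1 - Real.cos c := by nlinarith [Real.cos_le_one c]
    nlinarith [Real.sin_le_one t]
  rw [Real.sin_add]
  nlinarith

theorem stmt4 (f α : ℝ → ℝ) (hf : ∀ x, f x = x * Real.sin (Real.log x))
    (hα : ∀ x, α x = Real.exp (Real.cos (Real.log x))) :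
    ∀ u, 0 < u →
      α u * f u - f (α u * u) =
        u * Real.exp (Real.cos (Real.log u)) *
          (Real.sin (Real.log u) - Real.sin (Real.log u + Real.cos (Real.log u))) ∧
      α u * f u - f (α u * u) ≤ 0 := by
  intro u hu
  have hlog : Real.log (α u * u) = Real.log u + Real.cos (Real.log u) := by
    rw [hα, Real.log_mul (Real.exp_ne_zero _) (ne_of_gt hu), Real.log_exp]
    ring
  have heq : α u * f u - f (α u * u) =
      u * Real.exp (Real.cos (Real.log u)) *
        (Real.sin (Real.log u) - Real.sin (Real.log u + Real.cos (Real.log u))) := by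
    rw [hf, hf, hlog, hα]
    ring
  refine ⟨heq, ?_⟩
  rw [heq]
  have h1 : 0 ≤ u * Real.exp (Real.cos (Real.log u)) :=
    mul_nonneg hu.le (Real.exp_pos _).le
  have h2 : Real.sin (Real.log u) - Real.sin (Real.log u + Real.cos (Real.log u)) ≤ 0 := by
    linarith [key_sin (Real.log u)]
  exact mul_nonpos_of_nonneg_of_nonpos h1 h2
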